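/- Let d ≥ 1, 0 < α < 2, and let N be a seminorm on ℝ^d with K = {s ∈ S_d : N(s) = 0} and C = {s ∈ ℝ^d : N(s) = 1}. Let Γ be a finite symmetric Borel measure on the Euclidean unit sphere S_d. Then the following are equivalent: (i) there exists a symmetric Borel measure γ on ℝ^d concentrated on C such that ∫_C |⟨u,s⟩|^α dγ(s) < ∞ for every u ∈ ℝ^d and ∫_{S_d} |⟨u,s⟩|^α dΓ(s) = ∫_C |⟨u,s⟩|^α dγ(s) for every u ∈ ℝ^d; (ii) Γ(K) = 0. -/

import Mathlib

open MeasureTheory Filter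
open scoped RealInnerProductSpace ENNReal NNReal Topology

noncomputable abbrev E (d : ℕ) := EuclideanSpace ℝ (Fin d)

-- seminorm bound
theorem seminorm_bound {d : ℕ} (N : Seminorm ℝ (E d)) : ∃ M : ℝ, 0 < M ∧ ∀ x, N x ≤ M * ‖x‖ := by
  classical
  set b := EuclideanSpace.basisFun (Fin d) ℝ with hb
  refine ⟨∑ i, N (b i) + 1, by positivity, fun x => ?_⟩
  have hx : x = ∑ i, b.repr x i • b i := (b.sum_repr x).symm
  have h1 : N (∑ i, b.repr x i • b i) ≤ ∑ i, N (b.repr x i • b i) :=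
    Finset.le_sum_of_subadditive N (map_zero N).le (map_add_le_add N) _ _
  calc N x = N (∑ i, b.repr x i • b i) := by rw [← hx]
    _ ≤ ∑ i, N (b.repr x i • b i) := h1
    _ ≤ ∑ i, N (b i) * ‖x‖ := by
        refine Finset.sum_le_sum fun i _ => ?_
        rw [map_smul_eq_mul, mul_comm (N (b i))]
        gcongr
        · calc |b.repr x i| = |⟪EuclideanSpace.single i (1:ℝ), b.repr x⟫| := by
                rw [EuclideanSpace.inner_single_left]; simp
            _ ≤ ‖EuclideanSpace.single i (1:ℝ)‖ * ‖b.repr x‖ := abs_real_inner_le_norm _ _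
            _ = ‖x‖ := by rw [EuclideanSpace.norm_single]; simp
    _ ≤ (∑ i, N (b i) + 1) * ‖x‖ := by
        rw [← Finset.sum_mul]
        have : (0:ℝ) ≤ ‖x‖ := norm_nonneg x
        nlinarith [Finset.sum_nonneg (fun i (_ : i ∈ Finset.univ) => apply_nonneg N (b i))]

theorem seminorm_cont {d : ℕ} (N : Seminorm ℝ (E d)) : Continuous fun x => N x := by
  obtain ⟨M, hM, hbd⟩ := seminorm_bound N
  refine (LipschitzWith.continuous (K := ⟨M, hM.le⟩) ?_)
  intro x y
  rw [edist_dist, edist_dist, Real.dist_eq]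
  have h1 : N x ≤ N y + N (x - y) := by
    have := map_add_le_add N y (x - y); simpa using this
  have h2 : N y ≤ N x + N (x - y) := by
    have := map_add_le_add N x (y - x); have e : N (y-x) = N (x-y) := by
      rw [← neg_sub x y, map_neg_eq_map]
    simpa [e] using this
  have habs : |N x - N y| ≤ N (x - y) := abs_sub_le_iff.2 ⟨by linarith, by linarith⟩
  have : |N x - N y| ≤ M * dist x y := le_trans habs (by simpa [dist_eq_norm] using hbd (x - y))
  calc (ENNReal.ofReal |N x - N y|) ≤ ENNReal.ofReal (M * dist x y) := ENNReal.ofReal_le_ofReal this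
    _ = _ := by
        rw [ENNReal.ofReal_mul hM.le, ← edist_dist]
        congr 1
        simp [ENNReal.ofReal, Real.toNNReal_of_nonneg hM.le]
        rfl


theorem exists_onb {d : ℕ} (hd : 1 ≤ d) (w : E d) (hw : ‖w‖ = 1) :
    ∃ b : OrthonormalBasis (Fin d) ℝ (E d), b ⟨0, hd⟩ = w := by
  have hcard : Module.finrank ℝ (E d) = Fintype.card (Fin d) := by simp
  have hv : Orthonormal ℝ (({⟨0, hd⟩} : Set (Fin d)).restrict (fun _ => w)) := by
    rw [orthonormal_iff_ite]
    rintro ⟨i, hi⟩ ⟨j, hj⟩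
    simp only [Set.mem_singleton_iff] at hi hj
    subst hi; subst hj
    rw [if_pos rfl]
    show ⟪w, w⟫ = 1
    rw [real_inner_self_eq_norm_mul_norm, hw]; norm_num
  obtain ⟨b, hb⟩ := hv.exists_orthonormalBasis_extension_of_card_eq hcard
  exact ⟨b, hb _ rfl⟩

noncomputable def kap (d : ℕ) (hd : 1 ≤ d) (α : ℝ) : ENNReal :=
  ∫⁻ u in Metric.ball (0 : E d) 1, ENNReal.ofReal (|u ⟨0, hd⟩| ^ α)

theorem rot_lemma {d : ℕ} (hd : 1 ≤ d) {α : ℝ} (hα0 : 0 < α) (v : E d) :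
    ∫⁻ u in Metric.ball (0 : E d) 1, ENNReal.ofReal (|⟪u, v⟫| ^ α)
      = ENNReal.ofReal (‖v‖ ^ α) * kap d hd α := by
  rcases eq_or_ne v 0 with rfl | hv
  · simp only [inner_zero_right, abs_zero, Real.zero_rpow hα0.ne', norm_zero,
      ENNReal.ofReal_zero, lintegral_zero, zero_mul]
  · set w := ‖v‖⁻¹ • v with hwdef
    have hnv : (0:ℝ) < ‖v‖ := norm_pos_iff.2 hv
    have hw : ‖w‖ = 1 := by
      rw [hwdef, norm_smul]; simp [abs_of_pos (inv_pos.2 hnv)]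
      field_simp
    obtain ⟨b, hb⟩ := exists_onb hd w hw
    have hvw : v = ‖v‖ • w := by rw [hwdef, smul_smul]; field_simp; rw [one_smul]
    have key : ∀ u : E d, |⟪u, v⟫| ^ α = ‖v‖ ^ α * |(b.repr u) ⟨0, hd⟩| ^ α := by
      intro u
      have h1 : ⟪u, v⟫ = ‖v‖ * ⟪u, w⟫ := by
        conv_lhs => rw [hvw]
        rw [real_inner_smul_right]
      have h2 : ⟪u, w⟫ = (b.repr u) ⟨0, hd⟩ := by
        rw [← hb, ← b.repr.inner_map_map u (b ⟨0, hd⟩), b.repr_self,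
          EuclideanSpace.inner_single_right]
        simp
      rw [h1, h2, abs_mul, abs_of_pos hnv,
        Real.mul_rpow hnv.le (abs_nonneg _)]
    calc ∫⁻ u in Metric.ball (0 : E d) 1, ENNReal.ofReal (|⟪u, v⟫| ^ α)
        = ∫⁻ u in Metric.ball (0 : E d) 1,
            ENNReal.ofReal (‖v‖ ^ α) * ENNReal.ofReal (|(b.repr u) ⟨0, hd⟩| ^ α) := by
          refine lintegral_congr fun u => ?_
          rw [key u, ENNReal.ofReal_mul (Real.rpow_nonneg hnv.le _)]
      _ = ENNReal.ofReal (‖v‖ ^ α) * ∫⁻ u in Metric.ball (0 : E d) 1,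
            ENNReal.ofReal (|(b.repr u) ⟨0, hd⟩| ^ α) := by
          refine lintegral_const_mul _ ?_
          refine ENNReal.measurable_ofReal.comp ?_
          refine Continuous.measurable ?_
          refine Continuous.rpow_const ?_ (fun _ => Or.inr hα0.le)
          exact (continuous_abs.comp ((continuous_apply _).comp ((PiLp.continuous_ofLp 2 _).comp b.repr.continuous)))
      _ = ENNReal.ofReal (‖v‖ ^ α) * kap d hd α := by
          congr 1
          -- change of variables via measure preserving b.repr
          have hmp : MeasurePreserving (⇑b.repr) (volume : Measure (E d)) volume :=
            b.measurePreserving_repr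
          have hball : (⇑b.repr) ⁻¹' (Metric.ball (0 : E d) 1) = Metric.ball (0 : E d) 1 := by
            ext u
            simp [Metric.mem_ball, dist_eq_norm]
          have hemb : MeasurableEmbedding (⇑b.repr) :=
            b.repr.toHomeomorph.measurableEmbedding
          have h := MeasurePreserving.setLIntegral_comp_preimage_emb hmp hemb
            (fun y => ENNReal.ofReal (|y ⟨0, hd⟩| ^ α)) (Metric.ball (0 : E d) 1)
          rw [hball] at h
          exact h

theorem kap_ne_zero {d : ℕ} (hd : 1 ≤ d) {α : ℝ} (hα0 : 0 < α) : kap d hd α ≠ 0 := by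
  intro h0
  set i₀ : Fin d := ⟨0, hd⟩
  set B : Set (E d) := Metric.ball (0 : E d) 1 with hB
  have hmeas : Measurable fun u : E d => ENNReal.ofReal (|u i₀| ^ α) := by
    refine ENNReal.measurable_ofReal.comp (Continuous.measurable ?_)
    exact Continuous.rpow_const (continuous_abs.comp ((continuous_apply _).comp (PiLp.continuous_ofLp 2 _)))
      (fun _ => Or.inr hα0.le)
  rw [kap, lintegral_eq_zero_iff hmeas] at h0
  have h0' : (volume.restrict B) {u : E d | u i₀ ≠ 0} = 0 := by
    have hae := Filter.eventuallyEq_iff_exists_mem.mp h0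
    have hnull : (volume.restrict B) {u : E d | ¬ ENNReal.ofReal (|u i₀| ^ α) = 0} = 0 :=
      ae_iff.mp h0
    refine measure_mono_null (fun u hu => ?_) hnull
    simp only [Set.mem_setOf_eq] at hu ⊢
    rw [ENNReal.ofReal_eq_zero, not_le]
    exact Real.rpow_pos_of_pos (abs_pos.2 hu) _
  set e₀ : E d := EuclideanSpace.single i₀ 1 with he₀def
  have hker : {u : E d | u i₀ = 0}
      = (LinearMap.ker ((innerSL ℝ e₀ : E d →L[ℝ] ℝ) : E d →ₗ[ℝ] ℝ) : Set (E d)) := by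
    ext u
    simp [LinearMap.mem_ker, EuclideanSpace.inner_single_left, he₀def]
  have hproper : LinearMap.ker ((innerSL ℝ e₀ : E d →L[ℝ] ℝ) : E d →ₗ[ℝ] ℝ) ≠ ⊤ := by
    intro htop
    have he₀ : e₀ ∈ LinearMap.ker ((innerSL ℝ e₀ : E d →L[ℝ] ℝ) : E d →ₗ[ℝ] ℝ) := by
      rw [htop]; trivial
    have h00 : ⟪e₀, e₀⟫ = 0 := he₀
    rw [real_inner_self_eq_norm_mul_norm, EuclideanSpace.norm_single] at h00
    norm_num at h00
  have hnull : volume {u : E d | u i₀ = 0} = 0 := by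
    rw [hker]
    exact Measure.addHaar_submodule _ _ hproper
  have h2 : volume ({u : E d | u i₀ ≠ 0} ∩ B) = 0 := by
    rw [← Measure.restrict_apply' measurableSet_ball]
    exact h0'
  have hle : volume B ≤ volume {u : E d | u i₀ = 0} + volume ({u : E d | u i₀ ≠ 0} ∩ B) := by
    refine le_trans (measure_mono fun u hu => ?_) (measure_union_le _ _)
    by_cases h : u i₀ = 0
    · exact Or.inl h
    · exact Or.inr ⟨h, hu⟩
  rw [hnull, h2, add_zero] at hle
  exact (Metric.measure_ball_pos volume (0 : E d) one_pos).ne'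
    (le_antisymm hle zero_le)

theorem kap_ne_top {d : ℕ} (hd : 1 ≤ d) {α : ℝ} (hα0 : 0 < α) : kap d hd α ≠ ⊤ := by
  set i₀ : Fin d := ⟨0, hd⟩
  have hb : ∀ u ∈ Metric.ball (0 : E d) 1, ENNReal.ofReal (|u i₀| ^ α) ≤ 1 := by
    intro u hu
    rw [Metric.mem_ball, dist_zero_right] at hu
    have hle : |u i₀| ≤ ‖u‖ := by
      calc |u i₀| = |⟪EuclideanSpace.single i₀ (1:ℝ), u⟫| := by
            rw [EuclideanSpace.inner_single_left]; simp
        _ ≤ ‖EuclideanSpace.single i₀ (1:ℝ)‖ * ‖u‖ := abs_real_inner_le_norm _ _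
        _ = ‖u‖ := by rw [EuclideanSpace.norm_single]; simp
    have h1 : |u i₀| ≤ 1 := by linarith
    have : |u i₀| ^ α ≤ 1 := Real.rpow_le_one (abs_nonneg _) h1 hα0.le
    calc ENNReal.ofReal (|u i₀| ^ α) ≤ ENNReal.ofReal 1 := ENNReal.ofReal_le_ofReal this
      _ = 1 := ENNReal.ofReal_one
  have hle : kap d hd α ≤ 1 * volume (Metric.ball (0 : E d) 1) := by
    rw [kap]
    calc ∫⁻ u in Metric.ball (0 : E d) 1, ENNReal.ofReal (|u i₀| ^ α)
        ≤ ∫⁻ _ in Metric.ball (0 : E d) 1, 1 := setLIntegral_mono' measurableSet_ball hb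
      _ = 1 * volume (Metric.ball (0 : E d) 1) := setLIntegral_const _ _
  refine ne_top_of_le_ne_top ?_ hle
  rw [one_mul]
  exact (measure_ball_lt_top).ne



theorem forward_dir {d : ℕ} (α : ℝ) (hα0 : 0 < α) (hα2 : α < 2)
    (N : Seminorm ℝ (E d))
    (S K C : Set (E d))
    (hS : S = {s : E d | ‖s‖ = 1})
    (hK : K = {s ∈ S | N s = 0})
    (hC : C = {s : E d | N s = 1})
    (Γ : Measure (E d)) [IsFiniteMeasure Γ]
    (hΓS : Γ Sᶜ = 0)
    (hΓsym : Γ.map (fun x => -x) = Γ) (hΓK : Γ K = 0) :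
    (∃ γ : Measure (E d),
        γ.map (fun x => -x) = γ ∧ γ Cᶜ = 0 ∧
        (∀ u : E d,
          ∫⁻ s in C, ENNReal.ofReal (|⟪u, s⟫| ^ α) ∂γ < ⊤) ∧
        (∀ u : E d,
          ∫⁻ s in S, ENNReal.ofReal (|⟪u, s⟫| ^ α) ∂Γ
            = ∫⁻ s in C, ENNReal.ofReal (|⟪u, s⟫| ^ α) ∂γ)) := by
  have hNc : Continuous fun x => N x := seminorm_cont N
  set Z : Set (E d) := {x : E d | N x = 0} with hZ
  have hZmeas : MeasurableSet Z := hNc.measurable (measurableSet_singleton 0)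
  have hCmeas : MeasurableSet C := by
    rw [hC]; exact hNc.measurable (measurableSet_singleton 1)
  have hSmeas : MeasurableSet S := by
    rw [hS]
    exact (continuous_norm.measurable (measurableSet_singleton 1))
  set T : E d → E d := fun x => (N x)⁻¹ • x with hT
  have hTmeas : Measurable T := (hNc.measurable.inv).smul measurable_id
  set w : E d → ENNReal := fun x => ENNReal.ofReal (N x ^ α) with hw
  have hwmeas : Measurable w := by
    refine ENNReal.measurable_ofReal.comp (Continuous.measurable ?_)
    exact hNc.rpow_const (fun _ => Or.inr hα0.le)
  set μ : Measure (E d) := Γ.withDensity w with hμ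
  set γ : Measure (E d) := μ.map T with hγ
  have hweven : ∀ x : E d, w (-x) = w x := fun x => by simp [hw, map_neg_eq_map]
  have hμsym : μ.map (fun x : E d => -x) = μ := by
    refine Measure.ext fun A hA => ?_
    rw [Measure.map_apply measurable_neg hA, hμ,
      withDensity_apply _ (measurable_neg hA), withDensity_apply _ hA]
    conv_rhs => rw [← hΓsym]
    rw [setLIntegral_map hA hwmeas measurable_neg]
    exact lintegral_congr fun x => (hweven x).symm
  -- T ∘ neg = neg ∘ T
  have hTneg : ∀ x : E d, T (-x) = - T x := by
    intro x
    simp only [hT, map_neg_eq_map, smul_neg]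
  have hγsym : γ.map (fun x : E d => -x) = γ := by
    rw [hγ, Measure.map_map measurable_neg hTmeas]
    have : ((fun x : E d => -x) ∘ T) = T ∘ (fun x : E d => -x) := by
      funext x; simp [Function.comp, hTneg x]
    rw [this, ← Measure.map_map hTmeas measurable_neg, hμsym]
  -- Z preimage
  have hTC : T ⁻¹' Cᶜ = Z := by
    ext x
    simp only [Set.mem_preimage, Set.mem_compl_iff, hC, Set.mem_setOf_eq, hZ]
    constructor
    · intro h
      by_contra hx
      apply h
      rw [hT]
      simp only
      rw [map_smul_eq_mul, Real.norm_eq_abs]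
      rw [abs_of_pos (inv_pos.2 ((apply_nonneg N x).lt_of_ne (Ne.symm hx)))]
      field_simp
    · intro h hc
      rw [hT] at hc
      simp only at hc
      rw [map_smul_eq_mul, h, mul_zero] at hc
      norm_num at hc
  have hμZ : μ Z = 0 := by
    rw [hμ, withDensity_apply _ hZmeas]
    have : ∀ x ∈ Z, w x = 0 := by
      intro x hx
      have : N x = 0 := hx
      simp [hw, this, Real.zero_rpow hα0.ne']
    calc ∫⁻ x in Z, w x ∂Γ = ∫⁻ _ in Z, 0 ∂Γ := setLIntegral_congr_fun hZmeas
          this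
      _ = 0 := by simp
  have hγC : γ Cᶜ = 0 := by
    rw [hγ, Measure.map_apply hTmeas hCmeas.compl, hTC]
    exact hμZ
  -- main integral identity
  have hmain : ∀ u : E d, ∫⁻ s in S, ENNReal.ofReal (|⟪u, s⟫| ^ α) ∂Γ
      = ∫⁻ s in C, ENNReal.ofReal (|⟪u, s⟫| ^ α) ∂γ := by
    intro u
    set f : E d → ENNReal := fun s => ENNReal.ofReal (|⟪u, s⟫| ^ α) with hf
    have hfmeas : Measurable f := by
      refine ENNReal.measurable_ofReal.comp (Continuous.measurable ?_)
      exact ((continuous_abs.comp (continuous_const.inner continuous_id)).rpow_const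
        (fun _ => Or.inr hα0.le))
    have hres : γ.restrict C = γ := by
      refine Measure.restrict_eq_self_of_ae_mem ?_
      rw [Filter.Eventually]
      rw [mem_ae_iff]
      simpa using hγC
    have h1 : ∫⁻ s in C, f s ∂γ = ∫⁻ s, f s ∂γ := by rw [hres]
    have h2 : ∫⁻ s, f s ∂γ = ∫⁻ x, w x * f (T x) ∂Γ := by
      rw [hγ, lintegral_map hfmeas hTmeas, hμ,
        lintegral_withDensity_eq_lintegral_mul _ hwmeas
          (g := fun x => f (T x)) (hfmeas.comp hTmeas)]
      exact lintegral_congr fun x => rfl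
    -- split over Z
    have h3 : ∫⁻ x, w x * f (T x) ∂Γ = ∫⁻ x in Zᶜ, f x ∂Γ := by
      rw [← lintegral_add_compl (fun x => w x * f (T x)) hZmeas]
      have hZ0 : ∫⁻ x in Z, w x * f (T x) ∂Γ = 0 := by
        calc ∫⁻ x in Z, w x * f (T x) ∂Γ = ∫⁻ _ in Z, 0 ∂Γ := by
              refine setLIntegral_congr_fun hZmeas ?_
              intro x hx
              have : N x = 0 := hx
              simp [hw, this, Real.zero_rpow hα0.ne']
          _ = 0 := by simp
      rw [hZ0, zero_add]
      refine setLIntegral_congr_fun hZmeas.compl ?_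
      intro x hx
      have hx' : N x ≠ 0 := hx
      have hNx : 0 < N x := (apply_nonneg N x).lt_of_ne (Ne.symm hx')
      have hTx : ⟪u, T x⟫ = (N x)⁻¹ * ⟪u, x⟫ := by rw [hT]; exact real_inner_smul_right _ _ _
      have : w x * f (T x) = f x := by
        rw [hf, hw]
        simp only
        rw [hTx, abs_mul, abs_of_pos (inv_pos.2 hNx),
          Real.mul_rpow (inv_nonneg.2 hNx.le) (abs_nonneg _),
          ← ENNReal.ofReal_mul (Real.rpow_nonneg (apply_nonneg N x) _)]
        congr 1
        rw [Real.inv_rpow (apply_nonneg N x), ← mul_assoc,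
          mul_inv_cancel₀ (Real.rpow_pos_of_pos hNx α).ne', one_mul]
      exact this
    -- Z-complement vs S
    have h4 : ∫⁻ x in Zᶜ, f x ∂Γ = ∫⁻ x in S, f x ∂Γ := by
      refine setLIntegral_congr ?_
      rw [Filter.eventuallyEq_set]
      rw [ae_iff]
      have hsub : {x : E d | ¬ (x ∈ Zᶜ ↔ x ∈ S)} ⊆ Sᶜ ∪ K := by
        intro x hx
        simp only [Set.mem_setOf_eq] at hx
        by_cases hxS : x ∈ S
        · right
          rw [hK]
          refine ⟨hxS, ?_⟩
          by_contra hne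
          exact hx ⟨fun _ => hxS, fun _ => hne⟩
        · exact Or.inl hxS
      exact measure_mono_null hsub (measure_union_null hΓS hΓK)
    rw [h1, h2, h3, h4]
  have hbound : ∀ u : E d, ∫⁻ s in S, ENNReal.ofReal (|⟪u, s⟫| ^ α) ∂Γ < ⊤ := by
    intro u
    have hb : ∀ s ∈ S, ENNReal.ofReal (|⟪u, s⟫| ^ α) ≤ ENNReal.ofReal (‖u‖ ^ α) := by
      intro s hs
      have hs1 : ‖s‖ = 1 := by rw [hS] at hs; exact hs
      refine ENNReal.ofReal_le_ofReal ?_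
      refine Real.rpow_le_rpow (abs_nonneg _) ?_ hα0.le
      calc |⟪u, s⟫| ≤ ‖u‖ * ‖s‖ := abs_real_inner_le_norm _ _
        _ = ‖u‖ := by rw [hs1, mul_one]
    calc ∫⁻ s in S, ENNReal.ofReal (|⟪u, s⟫| ^ α) ∂Γ
        ≤ ∫⁻ _ in S, ENNReal.ofReal (‖u‖ ^ α) ∂Γ := setLIntegral_mono' hSmeas hb
      _ = ENNReal.ofReal (‖u‖ ^ α) * Γ S := setLIntegral_const _ _
      _ < ⊤ := ENNReal.mul_lt_top ENNReal.ofReal_lt_top (measure_lt_top Γ S)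
  exact ⟨γ, hγsym, hγC, fun u => (hmain u) ▸ hbound u, hmain⟩



-- two-term rpow subadditivity, real version
theorem real_rpow_add_le {x y p : ℝ} (hx : 0 ≤ x) (hy : 0 ≤ y) (hp0 : 0 ≤ p) (hp1 : p ≤ 1) :
    (x + y) ^ p ≤ x ^ p + y ^ p := by
  have h := NNReal.rpow_add_le_add_rpow x.toNNReal y.toNNReal hp0 hp1
  have hxy : ((x.toNNReal + y.toNNReal : ℝ≥0) : ℝ) = x + y := by
    push_cast
    rw [Real.coe_toNNReal _ hx, Real.coe_toNNReal _ hy]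
  calc (x + y) ^ p = ((x.toNNReal + y.toNNReal : ℝ≥0) : ℝ) ^ p := by rw [hxy]
    _ = (((x.toNNReal + y.toNNReal) ^ p : ℝ≥0) : ℝ) := by
        rw [NNReal.coe_rpow]
    _ ≤ ((x.toNNReal ^ p + y.toNNReal ^ p : ℝ≥0) : ℝ) := by exact_mod_cast h
    _ = x ^ p + y ^ p := by
        push_cast
        rw [Real.coe_toNNReal _ hx, Real.coe_toNNReal _ hy]

-- finset version
theorem real_rpow_sum_le {ι : Type*} (s : Finset ι) (f : ι → ℝ) (hf : ∀ i, 0 ≤ f i)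
    {p : ℝ} (hp0 : 0 ≤ p) (hp1 : p ≤ 1) (hpne : p ≠ 0) :
    (∑ i ∈ s, f i) ^ p ≤ ∑ i ∈ s, f i ^ p := by
  classical
  induction s using Finset.induction with
  | empty => simp [Real.zero_rpow hpne]
  | insert a t hnotmem ih =>
    rw [Finset.sum_insert hnotmem, Finset.sum_insert hnotmem]
    calc (f a + ∑ i ∈ t, f i) ^ p ≤ f a ^ p + (∑ i ∈ t, f i) ^ p :=
          real_rpow_add_le (hf a) (Finset.sum_nonneg fun i _ => hf i) hp0 hp1
      _ ≤ f a ^ p + ∑ i ∈ t, f i ^ p := by linarith [ih]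

set_option maxHeartbeats 1000000 in
theorem backward_dir {d : ℕ} (hd : 1 ≤ d) (α : ℝ) (hα0 : 0 < α) (hα2 : α < 2)
    (N : Seminorm ℝ (E d))
    (S K C : Set (E d))
    (hS : S = {s : E d | ‖s‖ = 1})
    (hK : K = {s ∈ S | N s = 0})
    (hC : C = {s : E d | N s = 1})
    (Γ : Measure (E d)) [IsFiniteMeasure Γ]
    (hΓS : Γ Sᶜ = 0)
    (γ : Measure (E d)) (hγC : γ Cᶜ = 0)
    (hid : ∀ u : E d,
          ∫⁻ s in S, ENNReal.ofReal (|⟪u, s⟫| ^ α) ∂Γ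
            = ∫⁻ s in C, ENNReal.ofReal (|⟪u, s⟫| ^ α) ∂γ) :
    Γ K = 0 := by
  classical
  have hNc : Continuous fun x => N x := seminorm_cont N
  obtain ⟨M, hM, hMb⟩ := seminorm_bound N
  have hβ0 : (0:ℝ) < α / 2 := by linarith
  have hβ1 : α / 2 < 1 := by linarith
  -- the kernel submodule
  set V : Submodule ℝ (E d) :=
    { carrier := {x : E d | N x = 0}
      add_mem' := by
        intro x y hx hy
        simp only [Set.mem_setOf_eq] at *
        have h1 : N (x + y) ≤ N x + N y := map_add_le_add N x y
        have h2 : 0 ≤ N (x + y) := apply_nonneg N _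
        rw [hx, hy] at h1
        linarith
      zero_mem' := map_zero N
      smul_mem' := by
        intro c x hx
        simp only [Set.mem_setOf_eq] at *
        rw [map_smul_eq_mul, hx, mul_zero] } with hV
  have hVmem : ∀ x : E d, x ∈ V ↔ N x = 0 := fun x => Iff.rfl
  set P : E d → E d := fun x => (V.orthogonalProjection x : E d) with hP
  set Q : E d → E d := fun x => (Vᗮ.orthogonalProjection x : E d) with hQ
  have hPc : Continuous P := continuous_subtype_val.comp V.orthogonalProjection.continuous
  have hQc : Continuous Q := continuous_subtype_val.comp Vᗮ.orthogonalProjection.continuous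
  have hPQ : ∀ x : E d, P x + Q x = x := fun x =>
    V.starProjection_add_starProjection_orthogonal x
  have hPQo : ∀ x : E d, ⟪P x, Q x⟫ = 0 := fun x =>
    Submodule.inner_right_of_mem_orthogonal (SetLike.coe_mem _) (SetLike.coe_mem _)
  have hpyth : ∀ x : E d, ‖P x‖ ^ 2 + ‖Q x‖ ^ 2 = ‖x‖ ^ 2 := by
    intro x
    have := norm_add_sq_real (P x) (Q x)
    rw [hPQ x, hPQo x] at this
    linarith
  have hnorm2 : ∀ (t : ℝ) (x : E d), ‖P x + t • Q x‖ ^ 2 = ‖P x‖ ^ 2 + t ^ 2 * ‖Q x‖ ^ 2 := by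
    intro t x
    have h := norm_add_sq_real (P x) (t • Q x)
    rw [real_inner_smul_right, hPQo x, mul_zero, norm_smul] at h
    rw [h]
    rw [mul_pow]
    rw [Real.norm_eq_abs, sq_abs]
    ring
  have hSmeas : MeasurableSet S := by
    rw [hS]; exact (continuous_norm.measurable (measurableSet_singleton 1))
  have hCmeas : MeasurableSet C := by
    rw [hC]; exact hNc.measurable (measurableSet_singleton 1)
  have hKmeas : MeasurableSet K := by
    have hKeq : K = S ∩ {x : E d | N x = 0} := by
      rw [hK]; ext x; simp [Set.mem_sep_iff, Set.mem_inter_iff]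
    rw [hKeq, hS]
    exact (continuous_norm.measurable (measurableSet_singleton 1)).inter
      (hNc.measurable (measurableSet_singleton 0))
  -- basic rpow identity
  have hsq : ∀ y : ℝ, 0 ≤ y → y ^ α = (y ^ 2) ^ (α / 2) := by
    intro y hy
    rw [← Real.rpow_natCast y 2, ← Real.rpow_mul hy]
    congr 1
    ring
  -- Finiteness of the gamma side total weighted mass
  set F₂ : ENNReal := ∫⁻ s in C, ENNReal.ofReal (‖s‖ ^ α) ∂γ with hF₂
  have hcoord : ∀ i : Fin d, ∫⁻ s in C, ENNReal.ofReal (|s i| ^ α) ∂γ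
      ≤ Γ S := by
    intro i
    have h1 := (hid (EuclideanSpace.single i (1:ℝ))).symm
    have h2 : ∀ s : E d, ⟪EuclideanSpace.single i (1:ℝ), s⟫ = s i := by
      intro s
      rw [EuclideanSpace.inner_single_left]
      simp
    calc ∫⁻ s in C, ENNReal.ofReal (|s i| ^ α) ∂γ
        = ∫⁻ s in C, ENNReal.ofReal (|⟪EuclideanSpace.single i (1:ℝ), s⟫| ^ α) ∂γ := by
          refine lintegral_congr fun s => by rw [h2]
      _ = ∫⁻ s in S, ENNReal.ofReal (|⟪EuclideanSpace.single i (1:ℝ), s⟫| ^ α) ∂Γ := h1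
      _ ≤ ∫⁻ _ in S, 1 ∂Γ := by
          refine setLIntegral_mono' hSmeas fun s hs => ?_
          have hs1 : ‖s‖ = 1 := by rw [hS] at hs; exact hs
          have : |⟪EuclideanSpace.single i (1:ℝ), s⟫| ≤ 1 := by
            calc |⟪EuclideanSpace.single i (1:ℝ), s⟫|
                ≤ ‖EuclideanSpace.single i (1:ℝ)‖ * ‖s‖ := abs_real_inner_le_norm _ _
              _ = 1 := by rw [hs1, EuclideanSpace.norm_single]; simp
          calc ENNReal.ofReal (|⟪EuclideanSpace.single i (1:ℝ), s⟫| ^ α)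
              ≤ ENNReal.ofReal 1 :=
                ENNReal.ofReal_le_ofReal (Real.rpow_le_one (abs_nonneg _) this hα0.le)
            _ = 1 := ENNReal.ofReal_one
      _ = Γ S := by rw [setLIntegral_one]
  have hF₂fin : F₂ ≠ ⊤ := by
    have hptw : ∀ s : E d, ENNReal.ofReal (‖s‖ ^ α)
        ≤ ∑ i : Fin d, ENNReal.ofReal (|s i| ^ α) := by
      intro s
      have h1 : ‖s‖ ^ α ≤ ∑ i : Fin d, |s i| ^ α := by
        have hn : ‖s‖ ^ α = (∑ i : Fin d, (s i) ^ 2) ^ (α / 2) := by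
          rw [hsq _ (norm_nonneg s)]
          congr 1
          rw [EuclideanSpace.norm_eq]
          rw [Real.sq_sqrt (Finset.sum_nonneg fun i _ => sq_nonneg _)]
          refine Finset.sum_congr rfl fun i _ => ?_
          rw [Real.norm_eq_abs, sq_abs]
        rw [hn]
        calc (∑ i : Fin d, (s i) ^ 2) ^ (α / 2)
            ≤ ∑ i : Fin d, ((s i) ^ 2) ^ (α / 2) :=
              real_rpow_sum_le _ _ (fun i => sq_nonneg _) hβ0.le hβ1.le hβ0.ne'
          _ = ∑ i : Fin d, |s i| ^ α := by
              refine Finset.sum_congr rfl fun i _ => ?_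
              rw [← sq_abs (s i), ← hsq _ (abs_nonneg _)]
      calc ENNReal.ofReal (‖s‖ ^ α) ≤ ENNReal.ofReal (∑ i : Fin d, |s i| ^ α) :=
            ENNReal.ofReal_le_ofReal h1
        _ = ∑ i : Fin d, ENNReal.ofReal (|s i| ^ α) :=
            ENNReal.ofReal_sum_of_nonneg fun i _ => Real.rpow_nonneg (abs_nonneg _) _
    have h2 : F₂ ≤ ∑ i : Fin d, ∫⁻ s in C, ENNReal.ofReal (|s i| ^ α) ∂γ := by
      calc F₂ ≤ ∫⁻ s in C, ∑ i : Fin d, ENNReal.ofReal (|s i| ^ α) ∂γ :=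
            lintegral_mono hptw
        _ = ∑ i : Fin d, ∫⁻ s in C, ENNReal.ofReal (|s i| ^ α) ∂γ := by
            refine lintegral_finset_sum _ fun i _ => ?_
            exact ENNReal.measurable_ofReal.comp (Continuous.measurable
              ((continuous_abs.comp ((continuous_apply _).comp (PiLp.continuous_ofLp 2 _))).rpow_const fun _ => Or.inr hα0.le))
    refine ne_top_of_le_ne_top ?_ (h2.trans (Finset.sum_le_sum fun i _ => hcoord i))
    exact ENNReal.sum_ne_top.2 fun i _ => (measure_ne_top Γ S)
  have hγCfin : γ C ≠ ⊤ := by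
    have hptw : ∀ s ∈ C, (1 : ENNReal) ≤ ENNReal.ofReal (M ^ α) * ENNReal.ofReal (‖s‖ ^ α) := by
      intro s hs
      have hNs : N s = 1 := by rw [hC] at hs; exact hs
      have h1 : (1:ℝ) ≤ M * ‖s‖ := by
        calc (1:ℝ) = N s := hNs.symm
          _ ≤ M * ‖s‖ := hMb s
      have h2 : (1:ℝ) ≤ (M * ‖s‖) ^ α := Real.one_le_rpow h1 hα0.le
      calc (1 : ENNReal) = ENNReal.ofReal 1 := ENNReal.ofReal_one.symm
        _ ≤ ENNReal.ofReal ((M * ‖s‖) ^ α) := ENNReal.ofReal_le_ofReal h2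
        _ = ENNReal.ofReal (M ^ α) * ENNReal.ofReal (‖s‖ ^ α) := by
            rw [Real.mul_rpow hM.le (norm_nonneg s),
              ENNReal.ofReal_mul (Real.rpow_nonneg hM.le _)]
    have : γ C ≤ ENNReal.ofReal (M ^ α) * F₂ := by
      calc γ C = ∫⁻ _ in C, 1 ∂γ := (setLIntegral_one _).symm
        _ ≤ ∫⁻ s in C, ENNReal.ofReal (M ^ α) * ENNReal.ofReal (‖s‖ ^ α) ∂γ :=
            setLIntegral_mono' hCmeas hptw
        _ = ENNReal.ofReal (M ^ α) * F₂ := by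
            rw [hF₂]
            refine lintegral_const_mul _ ?_
            exact ENNReal.measurable_ofReal.comp (Continuous.measurable
              (continuous_norm.rpow_const fun _ => Or.inr hα0.le))
    exact ne_top_of_le_ne_top (ENNReal.mul_ne_top ENNReal.ofReal_ne_top hF₂fin) this
  haveI hfin2 : IsFiniteMeasure (γ.restrict C) :=
    ⟨by rw [Measure.restrict_apply_univ]; exact lt_top_iff_ne_top.2 hγCfin⟩
  -- the swap identity
  have swap_eq : ∀ (m : Measure (E d)), IsFiniteMeasure m → ∀ t : ℝ,
      (∫⁻ u in Metric.ball (0 : E d) 1,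
        (∫⁻ s, ENNReal.ofReal (|⟪P u + t • Q u, s⟫| ^ α) ∂m))
      = (∫⁻ s, ENNReal.ofReal (‖P s + t • Q s‖ ^ α) ∂m) * kap d hd α := by
    intro m hm t
    haveI := hm
    have hAc : Continuous fun x : E d => P x + t • Q x := hPc.add (hQc.const_smul t)
    have hAsym : ∀ u s : E d, ⟪P u + t • Q u, s⟫ = ⟪u, P s + t • Q s⟫ := by
      intro u s
      rw [inner_add_left, inner_add_right, real_inner_smul_left, real_inner_smul_right]
      rw [hP, hQ]
      simp only
      have e1 : ⟪(V.orthogonalProjection u : E d), s⟫ = ⟪u, (V.orthogonalProjection s : E d)⟫ :=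
        V.inner_starProjection_left_eq_right u s
      have e2 : ⟪(Vᗮ.orthogonalProjection u : E d), s⟫ = ⟪u, (Vᗮ.orthogonalProjection s : E d)⟫ :=
        Vᗮ.inner_starProjection_left_eq_right u s
      rw [e1, e2]
    have hmeas : AEMeasurable (Function.uncurry fun (u : E d) (s : E d) =>
        ENNReal.ofReal (|⟪P u + t • Q u, s⟫| ^ α))
        ((volume.restrict (Metric.ball (0 : E d) 1)).prod m) := by
      refine (Continuous.measurable ?_).aemeasurable
      refine ENNReal.continuous_ofReal.comp ?_
      refine Continuous.rpow_const ?_ fun _ => Or.inr hα0.le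
      refine continuous_abs.comp ?_
      exact Continuous.inner (hAc.comp continuous_fst) continuous_snd
    rw [lintegral_lintegral_swap hmeas]
    calc ∫⁻ s, (∫⁻ u in Metric.ball (0 : E d) 1,
            ENNReal.ofReal (|⟪P u + t • Q u, s⟫| ^ α)) ∂m
        = ∫⁻ s, ENNReal.ofReal (‖P s + t • Q s‖ ^ α) * kap d hd α ∂m := by
          refine lintegral_congr fun s => ?_
          rw [← rot_lemma hd hα0 (P s + t • Q s)]
          exact lintegral_congr fun u => by rw [hAsym]
      _ = (∫⁻ s, ENNReal.ofReal (‖P s + t • Q s‖ ^ α) ∂m) * kap d hd α := by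
          refine lintegral_mul_const _ ?_
          exact ENNReal.measurable_ofReal.comp (Continuous.measurable
            ((hAc.norm).rpow_const fun _ => Or.inr hα0.le))
  -- main identity at parameter τ = n+1
  have Jeq : ∀ n : ℕ, ∫⁻ s in S,
        ENNReal.ofReal ((‖P s‖ ^ 2 + ((n:ℝ)+1) * ‖Q s‖ ^ 2) ^ (α/2)) ∂Γ
      = ∫⁻ s in C,
        ENNReal.ofReal ((‖P s‖ ^ 2 + ((n:ℝ)+1) * ‖Q s‖ ^ 2) ^ (α/2)) ∂γ := by
    intro n
    set t : ℝ := Real.sqrt ((n:ℝ)+1) with ht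
    have ht2 : t ^ 2 = (n:ℝ)+1 := Real.sq_sqrt (by positivity)
    have hptw : ∀ s : E d, ENNReal.ofReal (‖P s + t • Q s‖ ^ α)
        = ENNReal.ofReal ((‖P s‖ ^ 2 + ((n:ℝ)+1) * ‖Q s‖ ^ 2) ^ (α/2)) := by
      intro s
      rw [hsq _ (norm_nonneg _), hnorm2 t s, ht2]
    have h1 := swap_eq (Γ.restrict S) inferInstance t
    have h2 := swap_eq (γ.restrict C) inferInstance t
    have h12 : (∫⁻ u in Metric.ball (0 : E d) 1,
          (∫⁻ s, ENNReal.ofReal (|⟪P u + t • Q u, s⟫| ^ α) ∂(Γ.restrict S)))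
        = (∫⁻ u in Metric.ball (0 : E d) 1,
          (∫⁻ s, ENNReal.ofReal (|⟪P u + t • Q u, s⟫| ^ α) ∂(γ.restrict C))) := by
      exact lintegral_congr fun u => hid (P u + t • Q u)
    rw [h1, h2] at h12
    have h4 := (ENNReal.mul_left_inj (kap_ne_zero hd hα0) (kap_ne_top hd hα0)).mp h12
    calc ∫⁻ s in S, ENNReal.ofReal ((‖P s‖ ^ 2 + ((n:ℝ)+1) * ‖Q s‖ ^ 2) ^ (α/2)) ∂Γ
        = ∫⁻ s, ENNReal.ofReal (‖P s + t • Q s‖ ^ α) ∂(Γ.restrict S) :=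
          (lintegral_congr fun s => hptw s).symm
      _ = ∫⁻ s, ENNReal.ofReal (‖P s + t • Q s‖ ^ α) ∂(γ.restrict C) := h4
      _ = ∫⁻ s in C, ENNReal.ofReal ((‖P s‖ ^ 2 + ((n:ℝ)+1) * ‖Q s‖ ^ 2) ^ (α/2)) ∂γ :=
          lintegral_congr fun s => hptw s
  -- measurability helper
  have hmg : ∀ c : ℝ, Measurable fun s : E d =>
      ENNReal.ofReal ((‖P s‖ ^ 2 + c * ‖Q s‖ ^ 2) ^ (α/2)) := by
    intro c
    refine ENNReal.measurable_ofReal.comp (Continuous.measurable ?_)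
    exact ((hPc.norm.pow 2).add (continuous_const.mul (hQc.norm.pow 2))).rpow_const
      fun _ => Or.inr hβ0.le
  have htop : Tendsto (fun n : ℕ => ((n:ℝ)+1)) atTop atTop :=
    tendsto_atTop_add_const_right _ 1 tendsto_natCast_atTop_atTop
  -- pointwise infimum computation
  have hiInfpt : ∀ A B : ℝ, 0 ≤ A → 0 ≤ B →
      (⨅ n : ℕ, ENNReal.ofReal ((A/((n:ℝ)+1) + B) ^ (α/2))) = ENNReal.ofReal (B ^ (α/2)) := by
    intro A B hA hB
    have hanti : Antitone fun n : ℕ => ENNReal.ofReal ((A/((n:ℝ)+1) + B) ^ (α/2)) := by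
      intro n m hnm
      refine ENNReal.ofReal_le_ofReal ?_
      refine Real.rpow_le_rpow (by positivity) ?_ hβ0.le
      have h1 : A/((m:ℝ)+1) ≤ A/((n:ℝ)+1) := by
        have hc : ((n:ℝ)+1) ≤ ((m:ℝ)+1) := by
          have := (Nat.cast_le (α := ℝ)).mpr hnm
          linarith
        gcongr
      linarith
    have htend : Tendsto (fun n : ℕ => ENNReal.ofReal ((A/((n:ℝ)+1) + B) ^ (α/2))) atTop
        (𝓝 (ENNReal.ofReal (B ^ (α/2)))) := by
      have h1 : Tendsto (fun n : ℕ => A/((n:ℝ)+1)) atTop (𝓝 0) :=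
        Filter.Tendsto.div_atTop tendsto_const_nhds htop
      have h2 : Tendsto (fun n : ℕ => (A/((n:ℝ)+1) + B)) atTop (𝓝 B) := by
        have := h1.add (tendsto_const_nhds (x := B))
        simpa using this
      have h3 : ContinuousAt (fun x : ℝ => ENNReal.ofReal (x ^ (α/2))) B := by
        refine ENNReal.continuous_ofReal.continuousAt.comp ?_
        exact Real.continuousAt_rpow_const B (α/2) (Or.inr hβ0.le)
      exact h3.tendsto.comp h2
    exact tendsto_nhds_unique (tendsto_atTop_iInf hanti) htend
  -- rescaling pointwise
  have hscale : ∀ (n : ℕ) (s : E d),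
      ENNReal.ofReal ((‖P s‖ ^ 2/((n:ℝ)+1) + ‖Q s‖ ^ 2) ^ (α/2))
      = ENNReal.ofReal ((((n:ℝ)+1))⁻¹ ^ (α/2))
        * ENNReal.ofReal ((‖P s‖ ^ 2 + ((n:ℝ)+1) * ‖Q s‖ ^ 2) ^ (α/2)) := by
    intro n s
    rw [← ENNReal.ofReal_mul (by positivity)]
    congr 1
    rw [← Real.mul_rpow (by positivity) (by positivity)]
    congr 1
    have hne : ((n:ℝ)+1) ≠ 0 := by positivity
    field_simp
  -- identity for the pure b-term
  have hBb : ∫⁻ s in S, ENNReal.ofReal ((‖Q s‖ ^ 2) ^ (α/2)) ∂Γ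
      = ∫⁻ s in C, ENNReal.ofReal ((‖Q s‖ ^ 2) ^ (α/2)) ∂γ := by
    have hmeasn : ∀ n : ℕ, Measurable fun s : E d =>
        ENNReal.ofReal ((‖P s‖ ^ 2/((n:ℝ)+1) + ‖Q s‖ ^ 2) ^ (α/2)) := by
      intro n
      refine ENNReal.measurable_ofReal.comp (Continuous.measurable ?_)
      exact (((hPc.norm.pow 2).div_const _).add (hQc.norm.pow 2)).rpow_const
        fun _ => Or.inr hβ0.le
    have hantif : Antitone fun n : ℕ => fun s : E d =>
        ENNReal.ofReal ((‖P s‖ ^ 2/((n:ℝ)+1) + ‖Q s‖ ^ 2) ^ (α/2)) := by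
      intro n m hnm
      intro s
      refine ENNReal.ofReal_le_ofReal ?_
      refine Real.rpow_le_rpow (by positivity) ?_ hβ0.le
      have h1 : ‖P s‖ ^ 2/((m:ℝ)+1) ≤ ‖P s‖ ^ 2/((n:ℝ)+1) := by
        have hc : ((n:ℝ)+1) ≤ ((m:ℝ)+1) := by
          have := (Nat.cast_le (α := ℝ)).mpr hnm
          linarith
        gcongr
      linarith
    have hf0S : ∫⁻ s in S, ENNReal.ofReal ((‖P s‖ ^ 2/(((0:ℕ):ℝ)+1) + ‖Q s‖ ^ 2) ^ (α/2)) ∂Γ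
        ≠ ⊤ := by
      have hcong : ∀ᵐ s ∂Γ, s ∈ S →
          ENNReal.ofReal ((‖P s‖ ^ 2/(((0:ℕ):ℝ)+1) + ‖Q s‖ ^ 2) ^ (α/2)) = 1 := by
        refine ae_of_all _ fun s hs => ?_
        have hs1 : ‖s‖ = 1 := by rw [hS] at hs; exact hs
        have : ‖P s‖ ^ 2/(((0:ℕ):ℝ)+1) + ‖Q s‖ ^ 2 = 1 := by
          push_cast
          rw [zero_add, div_one, hpyth s, hs1, one_pow]
        rw [this, Real.one_rpow, ENNReal.ofReal_one]
      rw [setLIntegral_congr_fun_ae hSmeas hcong, setLIntegral_one]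
      exact measure_ne_top Γ S
    have hf0C : ∫⁻ s in C, ENNReal.ofReal ((‖P s‖ ^ 2/(((0:ℕ):ℝ)+1) + ‖Q s‖ ^ 2) ^ (α/2)) ∂γ
        ≠ ⊤ := by
      have hcong : ∀ s : E d,
          ENNReal.ofReal ((‖P s‖ ^ 2/(((0:ℕ):ℝ)+1) + ‖Q s‖ ^ 2) ^ (α/2))
            = ENNReal.ofReal (‖s‖ ^ α) := by
        intro s
        congr 1
        rw [hsq _ (norm_nonneg s), ← hpyth s]
        push_cast
        rw [zero_add, div_one]
      rw [lintegral_congr hcong]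
      exact hF₂fin
    have hterm : ∀ n : ℕ,
        ∫⁻ s in S, ENNReal.ofReal ((‖P s‖ ^ 2/((n:ℝ)+1) + ‖Q s‖ ^ 2) ^ (α/2)) ∂Γ
        = ∫⁻ s in C, ENNReal.ofReal ((‖P s‖ ^ 2/((n:ℝ)+1) + ‖Q s‖ ^ 2) ^ (α/2)) ∂γ := by
      intro n
      rw [lintegral_congr (hscale n), lintegral_congr (hscale n),
        lintegral_const_mul _ (hmg _), lintegral_const_mul _ (hmg _), Jeq n]
    calc ∫⁻ s in S, ENNReal.ofReal ((‖Q s‖ ^ 2) ^ (α/2)) ∂Γ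
        = ∫⁻ s in S, ⨅ n : ℕ,
            ENNReal.ofReal ((‖P s‖ ^ 2/((n:ℝ)+1) + ‖Q s‖ ^ 2) ^ (α/2)) ∂Γ :=
          (lintegral_congr fun s => hiInfpt _ _ (by positivity) (by positivity)).symm
      _ = ⨅ n : ℕ, ∫⁻ s in S,
            ENNReal.ofReal ((‖P s‖ ^ 2/((n:ℝ)+1) + ‖Q s‖ ^ 2) ^ (α/2)) ∂Γ :=
          lintegral_iInf hmeasn hantif hf0S
      _ = ⨅ n : ℕ, ∫⁻ s in C,
            ENNReal.ofReal ((‖P s‖ ^ 2/((n:ℝ)+1) + ‖Q s‖ ^ 2) ^ (α/2)) ∂γ :=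
          iInf_congr hterm
      _ = ∫⁻ s in C, ⨅ n : ℕ,
            ENNReal.ofReal ((‖P s‖ ^ 2/((n:ℝ)+1) + ‖Q s‖ ^ 2) ^ (α/2)) ∂γ :=
          (lintegral_iInf hmeasn hantif hf0C).symm
      _ = ∫⁻ s in C, ENNReal.ofReal ((‖Q s‖ ^ 2) ^ (α/2)) ∂γ :=
          lintegral_congr fun s => hiInfpt _ _ (by positivity) (by positivity)
  have hBmeas : Measurable fun s : E d => ENNReal.ofReal ((‖Q s‖ ^ 2) ^ (α/2)) := by
    refine ENNReal.measurable_ofReal.comp (Continuous.measurable ?_)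
    exact (hQc.norm.pow 2).rpow_const fun _ => Or.inr hβ0.le
  have hBfin : ∫⁻ s in S, ENNReal.ofReal ((‖Q s‖ ^ 2) ^ (α/2)) ∂Γ ≠ ⊤ := by
    have hb : ∀ s ∈ S, ENNReal.ofReal ((‖Q s‖ ^ 2) ^ (α/2)) ≤ 1 := by
      intro s hs
      have hs1 : ‖s‖ = 1 := by rw [hS] at hs; exact hs
      have h1 : ‖Q s‖ ^ 2 ≤ 1 := by
        have := hpyth s
        rw [hs1, one_pow] at this
        nlinarith [sq_nonneg (‖P s‖)]
      calc ENNReal.ofReal ((‖Q s‖ ^ 2) ^ (α/2)) ≤ ENNReal.ofReal 1 :=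
            ENNReal.ofReal_le_ofReal (Real.rpow_le_one (by positivity) h1 hβ0.le)
        _ = 1 := ENNReal.ofReal_one
    refine ne_top_of_le_ne_top (measure_ne_top Γ S) ?_
    calc ∫⁻ s in S, ENNReal.ofReal ((‖Q s‖ ^ 2) ^ (α/2)) ∂Γ
        ≤ ∫⁻ _ in S, 1 ∂Γ := setLIntegral_mono' hSmeas hb
      _ = Γ S := setLIntegral_one _
  -- the difference integrals
  have hrg : ∀ (n : ℕ) (s : E d), (((n:ℝ)+1) * ‖Q s‖ ^ 2) ^ (α/2)
      ≤ (‖P s‖ ^ 2 + ((n:ℝ)+1) * ‖Q s‖ ^ 2) ^ (α/2) := by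
    intro n s
    refine Real.rpow_le_rpow (by positivity) (by nlinarith [sq_nonneg ‖P s‖]) hβ0.le
  have hDmeas : ∀ n : ℕ, Measurable fun s : E d =>
      ENNReal.ofReal ((‖P s‖ ^ 2 + ((n:ℝ)+1) * ‖Q s‖ ^ 2) ^ (α/2)
        - (((n:ℝ)+1) * ‖Q s‖ ^ 2) ^ (α/2)) := by
    intro n
    refine ENNReal.measurable_ofReal.comp (Continuous.measurable ?_)
    refine Continuous.sub ?_ ?_
    · exact ((hPc.norm.pow 2).add (continuous_const.mul (hQc.norm.pow 2))).rpow_const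
        fun _ => Or.inr hβ0.le
    · exact (continuous_const.mul (hQc.norm.pow 2)).rpow_const fun _ => Or.inr hβ0.le
  have hsplit : ∀ (n : ℕ) (m : Measure (E d)),
      (∫⁻ s, ENNReal.ofReal ((‖P s‖ ^ 2 + ((n:ℝ)+1) * ‖Q s‖ ^ 2) ^ (α/2)) ∂m)
      = (∫⁻ s, ENNReal.ofReal ((‖P s‖ ^ 2 + ((n:ℝ)+1) * ‖Q s‖ ^ 2) ^ (α/2)
          - (((n:ℝ)+1) * ‖Q s‖ ^ 2) ^ (α/2)) ∂m)
        + ENNReal.ofReal (((n:ℝ)+1) ^ (α/2))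
          * (∫⁻ s, ENNReal.ofReal ((‖Q s‖ ^ 2) ^ (α/2)) ∂m) := by
    intro n m
    rw [← lintegral_const_mul _ hBmeas, ← lintegral_add_left (hDmeas n)]
    refine lintegral_congr fun s => ?_
    have h1 : ENNReal.ofReal (((n:ℝ)+1) ^ (α/2)) * ENNReal.ofReal ((‖Q s‖ ^ 2) ^ (α/2))
        = ENNReal.ofReal ((((n:ℝ)+1) * ‖Q s‖ ^ 2) ^ (α/2)) := by
      rw [← ENNReal.ofReal_mul (by positivity), ← Real.mul_rpow (by positivity) (by positivity)]
    rw [h1, ← ENNReal.ofReal_add (by linarith [hrg n s]) (by positivity)]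
    congr 1
    ring
  have Deq : ∀ n : ℕ,
      (∫⁻ s in S, ENNReal.ofReal ((‖P s‖ ^ 2 + ((n:ℝ)+1) * ‖Q s‖ ^ 2) ^ (α/2)
          - (((n:ℝ)+1) * ‖Q s‖ ^ 2) ^ (α/2)) ∂Γ)
      = (∫⁻ s in C, ENNReal.ofReal ((‖P s‖ ^ 2 + ((n:ℝ)+1) * ‖Q s‖ ^ 2) ^ (α/2)
          - (((n:ℝ)+1) * ‖Q s‖ ^ 2) ^ (α/2)) ∂γ) := by
    intro n
    have h1 := Jeq n
    rw [hsplit n (Γ.restrict S), hsplit n (γ.restrict C), hBb] at h1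
    have hfin : ENNReal.ofReal (((n:ℝ)+1) ^ (α/2))
        * (∫⁻ s in C, ENNReal.ofReal ((‖Q s‖ ^ 2) ^ (α/2)) ∂γ) ≠ ⊤ := by
      refine ENNReal.mul_ne_top ENNReal.ofReal_ne_top ?_
      rw [← hBb]
      exact hBfin
    exact (ENNReal.add_left_inj hfin).mp h1
  -- lower bound by Γ K
  have hKV : ∀ s : E d, s ∈ K → P s = s ∧ Q s = 0 := by
    intro s hs
    rw [hK] at hs
    have hsV : s ∈ V := by
      rw [hVmem]
      exact hs.2
    constructor
    · exact (Submodule.starProjection_eq_self_iff (K := V)).mpr hsV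
    · have h0 : Vᗮ.orthogonalProjection s = 0 :=
        Submodule.orthogonalProjection_mem_subspace_orthogonalComplement_eq_zero
          ((Submodule.le_orthogonal_orthogonal V) hsV)
      rw [hQ]
      simp only [h0]
      rfl
  have hKsubS : K ⊆ S := by
    rw [hK]
    exact fun s hs => hs.1
  have hlow : ∀ n : ℕ, Γ K ≤
      ∫⁻ s in C, ENNReal.ofReal ((‖P s‖ ^ 2 + ((n:ℝ)+1) * ‖Q s‖ ^ 2) ^ (α/2)
          - (((n:ℝ)+1) * ‖Q s‖ ^ 2) ^ (α/2)) ∂γ := by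
    intro n
    rw [← Deq n]
    have h1 : ∀ᵐ s ∂Γ, s ∈ K →
        ENNReal.ofReal ((‖P s‖ ^ 2 + ((n:ℝ)+1) * ‖Q s‖ ^ 2) ^ (α/2)
          - (((n:ℝ)+1) * ‖Q s‖ ^ 2) ^ (α/2)) = 1 := by
      refine ae_of_all _ fun s hs => ?_
      obtain ⟨hPs, hQs⟩ := hKV s hs
      have hs1 : ‖s‖ = 1 := by
        have := hKsubS hs
        rw [hS] at this
        exact this
      rw [hPs, hQs]
      rw [norm_zero]
      have e1 : (0:ℝ) ^ 2 = 0 := by norm_num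
      rw [e1, mul_zero, add_zero, hs1, one_pow, Real.one_rpow,
        Real.zero_rpow hβ0.ne', sub_zero, ENNReal.ofReal_one]
    calc Γ K = ∫⁻ _ in K, 1 ∂Γ := (setLIntegral_one _).symm
      _ = ∫⁻ s in K, ENNReal.ofReal ((‖P s‖ ^ 2 + ((n:ℝ)+1) * ‖Q s‖ ^ 2) ^ (α/2)
          - (((n:ℝ)+1) * ‖Q s‖ ^ 2) ^ (α/2)) ∂Γ :=
          (setLIntegral_congr_fun_ae hKmeas h1).symm
      _ ≤ ∫⁻ s in S, ENNReal.ofReal ((‖P s‖ ^ 2 + ((n:ℝ)+1) * ‖Q s‖ ^ 2) ^ (α/2)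
          - (((n:ℝ)+1) * ‖Q s‖ ^ 2) ^ (α/2)) ∂Γ := lintegral_mono_set hKsubS
  -- the γ-side difference integrals tend to 0
  have htend0 : Tendsto (fun n : ℕ =>
      ∫⁻ s in C, ENNReal.ofReal ((‖P s‖ ^ 2 + ((n:ℝ)+1) * ‖Q s‖ ^ 2) ^ (α/2)
          - (((n:ℝ)+1) * ‖Q s‖ ^ 2) ^ (α/2)) ∂γ) atTop (𝓝 0) := by
    have hlimit : ∀ᵐ s ∂γ.restrict C, Tendsto (fun n : ℕ =>
        ENNReal.ofReal ((‖P s‖ ^ 2 + ((n:ℝ)+1) * ‖Q s‖ ^ 2) ^ (α/2)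
          - (((n:ℝ)+1) * ‖Q s‖ ^ 2) ^ (α/2))) atTop (𝓝 0) := by
      have hVnull : (γ.restrict C) {s : E d | Q s = 0} = 0 := by
        have hQset : MeasurableSet {s : E d | Q s = 0} :=
          hQc.measurable (measurableSet_singleton 0)
        rw [Measure.restrict_apply hQset]
        have hempty : {s : E d | Q s = 0} ∩ C = ∅ := by
          rw [Set.eq_empty_iff_forall_notMem]
          rintro s ⟨hs1, hs2⟩
          have hsV : s ∈ V := by
            rw [← Submodule.orthogonal_orthogonal V]
            refine Submodule.orthogonalProjection_eq_zero_iff.mp ?_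
            have : (Vᗮ.orthogonalProjection s : E d) = 0 := hs1
            exact_mod_cast Submodule.coe_eq_zero.mp this
          have h1 : N s = 0 := (hVmem s).mp hsV
          have h2 : N s = 1 := by rw [hC] at hs2; exact hs2
          rw [h1] at h2
          norm_num at h2
        rw [hempty, measure_empty]
      rw [ae_iff]
      refine measure_mono_null (fun s hs => ?_) hVnull
      simp only [Set.mem_setOf_eq] at hs ⊢
      by_contra hQ0
      apply hs
      -- now Q s ≠ 0, prove the tendsto
      have hb2 : 0 < ‖Q s‖ ^ 2 := by
        have : Q s ≠ 0 := hQ0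
        have h1 : 0 < ‖Q s‖ := norm_pos_iff.mpr this
        positivity
      set A : ℝ := ‖P s‖ ^ 2 with hA
      have hA0 : 0 ≤ A := sq_nonneg _
      -- real sequence bound
      have hub : ∀ n : ℕ, (A + ((n:ℝ)+1) * ‖Q s‖ ^ 2) ^ (α/2)
          - (((n:ℝ)+1) * ‖Q s‖ ^ 2) ^ (α/2)
          ≤ A * (((n:ℝ)+1) * ‖Q s‖ ^ 2) ^ (α/2 - 1) := by
        intro n
        set X : ℝ := ((n:ℝ)+1) * ‖Q s‖ ^ 2 with hX
        have hX0 : 0 < X := by positivity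
        have h1 : A + X = X * (1 + A/X) := by field_simp; ring
        have key : (A + X) ^ (α/2) ≤ X ^ (α/2) + A * X ^ (α/2 - 1) := by
          rw [h1, Real.mul_rpow hX0.le (by positivity)]
          have h2 : (1 + A/X) ^ (α/2) ≤ 1 + A/X := by
            have hax : 0 ≤ A/X := by positivity
            calc (1 + A/X) ^ (α/2) ≤ (1 + A/X) ^ (1:ℝ) :=
                  Real.rpow_le_rpow_of_exponent_le (by linarith) (by linarith)
              _ = 1 + A/X := Real.rpow_one _
          calc X ^ (α/2) * (1 + A/X) ^ (α/2) ≤ X ^ (α/2) * (1 + A/X) :=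
                mul_le_mul_of_nonneg_left h2 (Real.rpow_nonneg hX0.le _)
            _ = X ^ (α/2) + A * X ^ (α/2 - 1) := by
                rw [Real.rpow_sub_one hX0.ne']
                field_simp
        linarith
      have hw0 : Tendsto (fun n : ℕ => A * (((n:ℝ)+1) * ‖Q s‖ ^ 2) ^ (α/2 - 1)) atTop
          (𝓝 0) := by
        have h1 : Tendsto (fun n : ℕ => (((n:ℝ)+1)) ^ (-(1 - α/2))) atTop (𝓝 0) :=
          (tendsto_rpow_neg_atTop (by linarith)).comp htop
        have h2 : ∀ n : ℕ, A * (((n:ℝ)+1) * ‖Q s‖ ^ 2) ^ (α/2 - 1)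
            = (A * (‖Q s‖ ^ 2) ^ (α/2 - 1)) * (((n:ℝ)+1)) ^ (-(1 - α/2)) := by
          intro n
          rw [Real.mul_rpow (by positivity) (by positivity)]
          have : -(1 - α/2) = α/2 - 1 := by ring
          rw [this]
          ring
        have h3 := h1.const_mul (A * (‖Q s‖ ^ 2) ^ (α/2 - 1))
        rw [mul_zero] at h3
        refine h3.congr fun n => ?_
        rw [← h2 n]
      have hreal : Tendsto (fun n : ℕ => (A + ((n:ℝ)+1) * ‖Q s‖ ^ 2) ^ (α/2)
          - (((n:ℝ)+1) * ‖Q s‖ ^ 2) ^ (α/2)) atTop (𝓝 0) := by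
        refine squeeze_zero (fun n => ?_) hub hw0
        have := hrg n s
        rw [hA]
        linarith [hrg n s]
      have := (ENNReal.continuous_ofReal.tendsto 0).comp hreal
      rw [ENNReal.ofReal_zero] at this
      refine this.congr fun n => ?_
      rw [Function.comp_apply, hA]
    have hbound : ∀ n : ℕ, (fun s : E d =>
        ENNReal.ofReal ((‖P s‖ ^ 2 + ((n:ℝ)+1) * ‖Q s‖ ^ 2) ^ (α/2)
          - (((n:ℝ)+1) * ‖Q s‖ ^ 2) ^ (α/2)))
        ≤ᵐ[γ.restrict C] fun s => ENNReal.ofReal ((‖s‖ ^ 2) ^ (α/2)) := by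
      intro n
      refine ae_of_all _ fun s => ?_
      refine ENNReal.ofReal_le_ofReal ?_
      have h1 : (‖P s‖ ^ 2 + ((n:ℝ)+1) * ‖Q s‖ ^ 2) ^ (α/2)
          ≤ (‖P s‖ ^ 2) ^ (α/2) + (((n:ℝ)+1) * ‖Q s‖ ^ 2) ^ (α/2) :=
        real_rpow_add_le (by positivity) (by positivity) hβ0.le hβ1.le
      have h2 : (‖P s‖ ^ 2) ^ (α/2) ≤ (‖s‖ ^ 2) ^ (α/2) := by
        refine Real.rpow_le_rpow (by positivity) ?_ hβ0.le
        nlinarith [hpyth s, sq_nonneg ‖Q s‖]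
      linarith
    have hbfin : ∫⁻ s in C, ENNReal.ofReal ((‖s‖ ^ 2) ^ (α/2)) ∂γ ≠ ⊤ := by
      have : ∀ s : E d, ENNReal.ofReal ((‖s‖ ^ 2) ^ (α/2)) = ENNReal.ofReal (‖s‖ ^ α) := by
        intro s
        rw [hsq _ (norm_nonneg s)]
      rw [lintegral_congr this]
      exact hF₂fin
    have := tendsto_lintegral_of_dominated_convergence _ hDmeas hbound hbfin hlimit
    rw [lintegral_zero] at this
    exact this
  have hfinal : Γ K ≤ 0 := ge_of_tendsto' htend0 hlow
  exact le_antisymm hfinal zero_le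


theorem stmt0 (d : ℕ) (hd : 1 ≤ d) (α : ℝ) (hα0 : 0 < α) (hα2 : α < 2)
    (N : Seminorm ℝ (EuclideanSpace ℝ (Fin d)))
    (S K C : Set (EuclideanSpace ℝ (Fin d)))
    (hS : S = {s : EuclideanSpace ℝ (Fin d) | ‖s‖ = 1})
    (hK : K = {s ∈ S | N s = 0})
    (hC : C = {s : EuclideanSpace ℝ (Fin d) | N s = 1})
    (Γ : Measure (EuclideanSpace ℝ (Fin d))) [IsFiniteMeasure Γ]
    (hΓS : Γ Sᶜ = 0)
    (hΓsym : Γ.map (fun x => -x) = Γ) :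
    (∃ γ : Measure (EuclideanSpace ℝ (Fin d)),
        γ.map (fun x => -x) = γ ∧ γ Cᶜ = 0 ∧
        (∀ u : EuclideanSpace ℝ (Fin d),
          ∫⁻ s in C, ENNReal.ofReal (|⟪u, s⟫| ^ α) ∂γ < ⊤) ∧
        (∀ u : EuclideanSpace ℝ (Fin d),
          ∫⁻ s in S, ENNReal.ofReal (|⟪u, s⟫| ^ α) ∂Γ
            = ∫⁻ s in C, ENNReal.ofReal (|⟪u, s⟫| ^ α) ∂γ)) ↔
      Γ K = 0 := by
  constructor
  · rintro ⟨γ, hγsym, hγC, hγfin, hid⟩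
    exact backward_dir hd α hα0 hα2 N S K C hS hK hC Γ hΓS γ hγC hid
  · intro hΓK
    exact forward_dir α hα0 hα2 N S K C hS hK hC Γ hΓS hΓsym hΓK
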